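/- Let σ² > 0 with σ² > (2π)^{−1} e^{−3}, and let d > 0. Then the function γ ↦ − (d²/σ²) · (2πσ²)^{−γ/(2(1+γ))} · (1+γ)^{−3/2} is strictly increasing on the interval [0, 1]. In particular, its unique minimizer over [0, 1] is γ = 0. -/

import Mathlib

open Real

/-- Population criterion `Q(γ) = −(d²/σ²)(2πσ²)^{−γ/(2(1+γ))}(1+γ)^{−3/2}`. -/
noncomputable def Qcrit (d s2 γ : ℝ) : ℝ :=
  -(d ^ 2 / s2) * (2 * Real.pi * s2) ^ (-(γ / (2 * (1 + γ)))) * (1 + γ) ^ (-(3 : ℝ) / 2)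

/-- If `σ² > (2π)⁻¹ e⁻³`, the population criterion is strictly increasing on `[0,1]`,
so its unique minimizer over `[0,1]` is `γ = 0`. -/
theorem Qcrit_strictMonoOn (s2 d : ℝ) (hs2 : 0 < s2)
    (hs2' : (2 * Real.pi)⁻¹ * Real.exp (-3) < s2) (hd : 0 < d) :
    StrictMonoOn (fun γ => Qcrit d s2 γ) (Set.Icc 0 1) ∧
      ∀ γ ∈ Set.Icc (0 : ℝ) 1, γ ≠ 0 → Qcrit d s2 0 < Qcrit d s2 γ := by
  have hpi := Real.pi_pos
  set B := 2 * Real.pi * s2 with hBdef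
  have hB : 0 < B := by positivity
  have hL : -3 < Real.log B := by
    have h2pi : (0:ℝ) < 2 * Real.pi := by positivity
    have hBe : Real.exp (-3) < B := by
      calc Real.exp (-3) = (2 * Real.pi) * ((2 * Real.pi)⁻¹ * Real.exp (-3)) := by
            field_simp
        _ < (2 * Real.pi) * s2 := (mul_lt_mul_iff_right₀ h2pi).2 hs2'
    calc (-3:ℝ) = Real.log (Real.exp (-3)) := (Real.log_exp _).symm
      _ < Real.log B := Real.log_lt_log (Real.exp_pos _) hBe
  set L := Real.log B with hLdef
  set g : ℝ → ℝ := fun γ => -(γ / (2 * (1 + γ))) * L + (-(3:ℝ)/2) * Real.log (1 + γ)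
    with hg
  have hQ : ∀ γ ∈ Set.Icc (0:ℝ) 1, Qcrit d s2 γ = -(d^2/s2) * Real.exp (g γ) := by
    intro γ hγ
    have h1γ : (0:ℝ) < 1 + γ := by linarith [hγ.1]
    have e1 : B ^ (-(γ / (2 * (1 + γ)))) = Real.exp (-(γ / (2 * (1 + γ))) * L) := by
      rw [Real.rpow_def_of_pos hB, hLdef]; ring_nf
    have e2 : (1 + γ) ^ (-(3:ℝ)/2) = Real.exp ((-(3:ℝ)/2) * Real.log (1 + γ)) := by
      rw [Real.rpow_def_of_pos h1γ]; ring_nf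
    simp only [Qcrit, ← hBdef, e1, e2, hg, Real.exp_add]
    ring
  have hanti : StrictAntiOn g (Set.Icc 0 1) := by
    apply strictAntiOn_of_deriv_neg (convex_Icc 0 1)
    · apply ContinuousOn.add
      · apply ContinuousOn.mul _ continuousOn_const
        apply ContinuousOn.neg
        apply ContinuousOn.div continuousOn_id
        · exact continuousOn_const.mul (continuousOn_const.add continuousOn_id)
        · intro x hx
          have : (0:ℝ) < 1 + x := by linarith [hx.1]
          positivity
      · refine continuousOn_const.mul (Real.continuousOn_log.comp
          (continuousOn_const.add continuousOn_id) ?_)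
        intro x hx
        have : (0:ℝ) < 1 + x := by linarith [hx.1]
        exact ne_of_gt this
    · intro x hx
      rw [interior_Icc] at hx
      have hx0 : 0 < x := hx.1
      have h1x : (0:ℝ) < 1 + x := by linarith
      have hD : HasDerivAt g (-(1 / (2 * (1 + x)^2)) * L + (-(3:ℝ)/2) * (1 / (1 + x))) x := by
        have h1 : HasDerivAt (fun γ : ℝ => γ / (2 * (1 + γ))) (1 / (2 * (1 + x)^2)) x := by
          have hnum : HasDerivAt (fun γ : ℝ => γ) 1 x := hasDerivAt_id x
          have hden : HasDerivAt (fun γ : ℝ => 2 * (1 + γ)) 2 x := by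
            simpa using ((hasDerivAt_id x).const_add 1).const_mul 2
          have h := hnum.div hden (by positivity)
          exact h.congr_deriv (by rw [div_eq_div_iff (by positivity) (by positivity)]; ring)
        have h2 : HasDerivAt (fun γ : ℝ => Real.log (1 + γ)) (1 / (1 + x)) x := by
          have hi : HasDerivAt (fun γ : ℝ => 1 + γ) 1 x := (hasDerivAt_id x).const_add 1
          simpa [Function.comp_def] using (Real.hasDerivAt_log (ne_of_gt h1x)).comp x hi
        exact (h1.neg.mul_const L).add (h2.const_mul (-(3:ℝ)/2))
      rw [hD.deriv]
      have key : 0 < L + 3 * (1 + x) := by nlinarith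
      have heq : -(1 / (2 * (1 + x)^2)) * L + (-(3:ℝ)/2) * (1 / (1 + x))
          = -((L + 3 * (1 + x)) / (2 * (1 + x)^2)) := by
        field_simp
        ring
      rw [heq]
      exact neg_lt_zero.mpr (div_pos key (by positivity))
  have hmono : StrictMonoOn (fun γ => Qcrit d s2 γ) (Set.Icc 0 1) := by
    intro x hx y hy hxy
    simp only [hQ x hx, hQ y hy]
    have hgy : g y < g x := hanti hx hy hxy
    have hexp : Real.exp (g y) < Real.exp (g x) := Real.exp_lt_exp.2 hgy
    have hC : -(d^2/s2) < 0 := neg_lt_zero.mpr (by positivity)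
    exact mul_lt_mul_of_neg_left hexp hC
  refine ⟨hmono, fun γ hγ hne => ?_⟩
  exact hmono ⟨le_refl 0, zero_le_one⟩ hγ (lt_of_le_of_ne hγ.1 (Ne.symm hne))
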